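/- The filling map f : ℱ(λ) → T(λ,n) is surjective: for every nonattacking filling σ ∈ T(λ,n) there exists a folding pair (w,T) with f(w,T) = σ. -/

import Mathlib

open Finset

namespace Compress

attribute [local instance] Classical.propDecidable

noncomputable section

/-! ### Permutations of `{1,…,n}`, 1-based conventions -/

/-- The 1-based index `i ∈ {1,…,n}` as an element of `Fin n`. -/
def idx (n : ℕ) [NeZero n] (i : ℕ) : Fin n :=
  ⟨(i - 1) % n, Nat.mod_lt _ (Nat.pos_of_ne_zero (NeZero.ne n))⟩

/-- The 1-based value `w(i) ∈ {1,…,n}` of a permutation `w ∈ S_n`. -/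
def pv {n : ℕ} [NeZero n] (w : Equiv.Perm (Fin n)) (i : ℕ) : ℕ :=
  (w (idx n i)).val + 1

/-- The transposition `(i,k)` of `{1,…,n}` (1-based). -/
def tr (n : ℕ) [NeZero n] (i k : ℕ) : Equiv.Perm (Fin n) :=
  Equiv.swap (idx n i) (idx n k)

/-- The Coxeter length of `w ∈ S_n`, i.e. its number of inversions. -/
def len {n : ℕ} [NeZero n] (w : Equiv.Perm (Fin n)) : ℕ :=
  ((Finset.univ : Finset (Fin n × Fin n)).filter fun p => p.1 < p.2 ∧ w p.2 < w p.1).card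

/-- Right multiplication of `w` by a list of transpositions (given as 1-based pairs),
taken from left to right. -/
def applyTs {n : ℕ} [NeZero n] (w : Equiv.Perm (Fin n)) (L : List (ℕ × ℕ)) :
    Equiv.Perm (Fin n) :=
  L.foldl (fun u p => u * tr n p.1 p.2) w

/-! ### Subsequences of a list of transpositions, encoded by sets of positions -/

/-- The subsequence of the list `Δ` of transpositions occupying the (0-based) positions in `J`,
listed in increasing order of positions. -/
def pickP (Δ : List (ℕ × ℕ)) (J : Finset ℕ) : List (ℕ × ℕ) :=
  (J.sort (· ≤ ·)).map fun r => Δ.getD r (0, 0)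

/-- `w r_1 ⋯ r_s` where `r_1,…,r_s` is the subsequence of `Δ` at positions `J`. -/
def wT {n : ℕ} [NeZero n] (w : Equiv.Perm (Fin n)) (Δ : List (ℕ × ℕ)) (J : Finset ℕ) :
    Equiv.Perm (Fin n) :=
  applyTs w (pickP Δ J)

/-- The partial product `w r_1 ⋯ r_{a-1}` just before using the entry at position `r ∈ J`. -/
def stepPerm {n : ℕ} [NeZero n] (w : Equiv.Perm (Fin n)) (Δ : List (ℕ × ℕ)) (J : Finset ℕ)
    (r : ℕ) : Equiv.Perm (Fin n) :=
  applyTs w (pickP Δ (J.filter fun x => x < r))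

/-- The entry at position `r ∈ J` is positive in the increasing-length convention:
`ℓ(w r_1⋯r_{a−1}) < ℓ(w r_1⋯r_a)`. -/
def isPosInc {n : ℕ} [NeZero n] (w : Equiv.Perm (Fin n)) (Δ : List (ℕ × ℕ)) (J : Finset ℕ)
    (r : ℕ) : Prop :=
  len (stepPerm w Δ J r) <
    len (stepPerm w Δ J r * tr n (Δ.getD r (0, 0)).1 (Δ.getD r (0, 0)).2)

/-- The entry at position `r ∈ J` is positive in the decreasing-length convention
(a positive folding): `ℓ(w r_1⋯r_{a−1}) > ℓ(w r_1⋯r_a)`. -/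
def isPosDec {n : ℕ} [NeZero n] (w : Equiv.Perm (Fin n)) (Δ : List (ℕ × ℕ)) (J : Finset ℕ)
    (r : ℕ) : Prop :=
  len (stepPerm w Δ J r * tr n (Δ.getD r (0, 0)).1 (Δ.getD r (0, 0)).2) <
    len (stepPerm w Δ J r)

/-! ### The field `ℚ(q,t)` -/

/-- The field `ℚ(q,t)` of rational functions in two variables. -/
abbrev Kqt : Type := FractionRing (MvPolynomial (Fin 2) ℚ)

/-- The variable `q` of `ℚ(q,t)`. -/
def qq : Kqt := algebraMap (MvPolynomial (Fin 2) ℚ) Kqt (MvPolynomial.X 0)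

/-- The variable `t` of `ℚ(q,t)`. -/
def tt : Kqt := algebraMap (MvPolynomial (Fin 2) ℚ) Kqt (MvPolynomial.X 1)

/-! ### The partition λ, its diagram and statistics on fillings -/

/-- `conj n lam j = λ'_j`, the length of column `j`. -/
def conj (n : ℕ) (lam : ℕ → ℕ) (j : ℕ) : ℕ :=
  ((Finset.Icc 1 (n - 1)).filter fun i => j ≤ lam i).card

/-- The cells `(i,j)` of the Young diagram of λ: `1 ≤ i ≤ n−1`, `1 ≤ j ≤ λ_i`. -/
def cells (n : ℕ) (lam : ℕ → ℕ) : Finset (ℕ × ℕ) :=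
  (Finset.Icc 1 (n - 1) ×ˢ Finset.Icc 1 (lam 1)).filter fun c => c.2 ≤ lam c.1

/-- Two cells attack each other: same column, or consecutive columns with the
left-column cell strictly above the right-column cell (column `j+1` is left of column `j`). -/
def attack (u v : ℕ × ℕ) : Prop :=
  (u.2 = v.2 ∧ u.1 ≠ v.1) ∨ (u.2 = v.2 + 1 ∧ u.1 < v.1) ∨ (v.2 = u.2 + 1 ∧ v.1 < u.1)

/-- `u` comes before `v` in the reading order (columns right to left, i.e. column 1 first,
each column top to bottom). -/
def readBefore (u v : ℕ × ℕ) : Prop :=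
  u.2 < v.2 ∨ (u.2 = v.2 ∧ u.1 < v.1)

/-- σ is a nonattacking filling of λ with entries in `{1,…,n}`, i.e. `σ ∈ T(λ,n)`. -/
def NonAttacking (n : ℕ) (lam : ℕ → ℕ) (σ : ℕ × ℕ → ℕ) : Prop :=
  (∀ u ∈ cells n lam, σ u ∈ Finset.Icc 1 n) ∧
    ∀ u ∈ cells n lam, ∀ v ∈ cells n lam, attack u v → σ u ≠ σ v

/-- The descent set of a filling. -/
def DesSet (n : ℕ) (lam : ℕ → ℕ) (σ : ℕ × ℕ → ℕ) : Finset (ℕ × ℕ) :=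
  (cells n lam).filter fun u => (u.1, u.2 + 1) ∈ cells n lam ∧ σ (u.1, u.2 + 1) < σ u

/-- `Diff(σ)`. -/
def DiffSet (n : ℕ) (lam : ℕ → ℕ) (σ : ℕ × ℕ → ℕ) : Finset (ℕ × ℕ) :=
  (cells n lam).filter fun u => (u.1, u.2 + 1) ∈ cells n lam ∧ σ (u.1, u.2 + 1) ≠ σ u

/-- `arm(i,j) = λ_i − j`. -/
def armC (lam : ℕ → ℕ) (u : ℕ × ℕ) : ℕ := lam u.1 - u.2

/-- `leg(i,j) = λ'_j − i`. -/
def legC (n : ℕ) (lam : ℕ → ℕ) (u : ℕ × ℕ) : ℕ := conj n lam u.2 - u.1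

/-- `maj(σ) = Σ_{u ∈ Des(σ)} arm(u)`. -/
def majStat (n : ℕ) (lam : ℕ → ℕ) (σ : ℕ × ℕ → ℕ) : ℕ :=
  ∑ u ∈ DesSet n lam σ, armC lam u

/-- `|Inv(σ)|`: the number of pairs of attacking cells `u` before `v` in reading order
with `σ(u) > σ(v)`. -/
def invPairsL (n : ℕ) (lam : ℕ → ℕ) (σ : ℕ × ℕ → ℕ) : ℕ :=
  ((cells n lam ×ˢ cells n lam).filter fun x =>
    attack x.1 x.2 ∧ readBefore x.1 x.2 ∧ σ x.2 < σ x.1).card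

/-- `inv(σ) = |Inv(σ)| − Σ_{u ∈ Des(σ)} leg(u)`. -/
def invStat (n : ℕ) (lam : ℕ → ℕ) (σ : ℕ × ℕ → ℕ) : ℤ :=
  (invPairsL n lam σ : ℤ) - ∑ u ∈ DesSet n lam σ, (legC n lam u : ℤ)

/-- `n(λ) = Σ_i (i−1) λ_i`. -/
def nlam (n : ℕ) (lam : ℕ → ℕ) : ℕ :=
  ∑ i ∈ Finset.Icc 1 n, (i - 1) * lam i

/-- The Haglund–Haiman–Loehr-type weight of a filling:
`HHL(σ) = t^{n(λ)−inv(σ)} q^{maj(σ)} Π_{u∈Diff(σ)} (1−t)/(1−q^{arm(u)} t^{leg(u)+1})`. -/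
def HHL (n : ℕ) (lam : ℕ → ℕ) (σ : ℕ × ℕ → ℕ) : Kqt :=
  tt ^ ((nlam n lam : ℤ) - invStat n lam σ) * qq ^ majStat n lam σ *
    ∏ u ∈ DiffSet n lam σ, (1 - tt) / (1 - qq ^ armC lam u * tt ^ (legC n lam u + 1))

/-! ### The λ-chain Γ -/

/-- The row `(i,n),(i,n−1),…,(i,low)`. -/
def rowL (n i low : ℕ) : List (ℕ × ℕ) :=
  (List.range (n + 1 - low)).map fun r => (i, n - r)

/-- `Γ(k)`: rows `i = k, k−1, …, 1`, row `i` being `(i,n),…,(i,k+1)`. -/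
def GammaK (n k : ℕ) : List (ℕ × ℕ) :=
  (List.range k).flatMap fun s => rowL n (k - s) (k + 1)

/-- `Γ'(k)`: rows `i = k, k−1, …, 1`, row `i` being `(i,n),…,(i,k+2)`
(the last transposition `(i,k+1)` of each row of `Γ(k)` removed). -/
def GammaK' (n k : ℕ) : List (ℕ × ℕ) :=
  (List.range k).flatMap fun s => rowL n (k - s) (k + 2)

/-- The λ-chain `Γ = Γ_{λ_1} Γ_{λ_1−1} ⋯ Γ_2`, where `Γ_j = Γ'(λ'_j)` if
`j = min{i : λ'_i = λ'_j}` (equivalently `λ'_{j−1} ≠ λ'_j`) and `Γ_j = Γ(λ'_j)` otherwise.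
Each entry records its segment index `j` together with the root `(i,k)`. -/
def lamChain (n : ℕ) (lam : ℕ → ℕ) : List (ℕ × ℕ × ℕ) :=
  (List.range (lam 1 - 1)).flatMap fun s =>
    let j := lam 1 - s
    let seg :=
      if conj n lam (j - 1) = conj n lam j then GammaK n (conj n lam j)
      else GammaK' n (conj n lam j)
    seg.map fun p => (j, p.1, p.2)

/-- The underlying list of roots (transpositions) of the λ-chain. -/
def chainRoots (Γ : List (ℕ × ℕ × ℕ)) : List (ℕ × ℕ) := Γ.map fun e => e.2

/-! ### The Ram–Yip weight and the filling map -/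

/-- The Ram–Yip weight `RY(w,T)` of a folding pair, where `T` is the subsequence of the
λ-chain at positions `J`. -/
def RY (n : ℕ) [NeZero n] (lam : ℕ → ℕ) (w : Equiv.Perm (Fin n)) (J : Finset ℕ) : Kqt :=
  tt ^ (((len w : ℤ) - (len (wT w (chainRoots (lamChain n lam)) J) : ℤ) - (J.card : ℤ)) / 2) *
    (1 - tt) ^ J.card *
    ∏ r ∈ J,
      (let e := (lamChain n lam).getD r (0, 0, 0)
       let a := lam e.2.1 - (e.1 - 1)
       if isPosDec w (chainRoots (lamChain n lam)) J r then
         (1 - qq ^ a * tt ^ (e.2.2 - e.2.1))⁻¹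
       else qq ^ a * tt ^ (e.2.2 - e.2.1) * (1 - qq ^ a * tt ^ (e.2.2 - e.2.1))⁻¹)

/-- `π_j = w T_{λ_1} ⋯ T_{j+1}`: the product of `w` with the entries of `T` lying in the
segments of column index `> j`. -/
def pij (n : ℕ) [NeZero n] (lam : ℕ → ℕ) (w : Equiv.Perm (Fin n)) (J : Finset ℕ) (j : ℕ) :
    Equiv.Perm (Fin n) :=
  applyTs w (pickP (chainRoots (lamChain n lam))
    (J.filter fun r => j < ((lamChain n lam).getD r (0, 0, 0)).1))

/-- The filling map `f`: `f(w,T)(i,j) = π_j(i)` on cells of λ (and `0` off the diagram). -/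
def fmap (n : ℕ) [NeZero n] (lam : ℕ → ℕ) (w : Equiv.Perm (Fin n)) (J : Finset ℕ) :
    ℕ × ℕ → ℕ :=
  fun c => if c ∈ cells n lam then pv (pij n lam w J c.2) c.1 else 0

/-- The fiber `f⁻¹(σ)` of the filling map over σ, inside `ℱ(λ)`. -/
def fiberSet (n : ℕ) [NeZero n] (lam : ℕ → ℕ) (σ : ℕ × ℕ → ℕ) :
    Finset (Equiv.Perm (Fin n) × Finset ℕ) :=
  (Finset.univ ×ˢ (Finset.range (lamChain n lam).length).powerset).filter
    fun p => ∀ u ∈ cells n lam, fmap n lam p.1 p.2 u = σ u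

/-- The Finset of all nonattacking fillings `T(λ,n)` (normalized to vanish off the diagram). -/
def TFinset (n : ℕ) (lam : ℕ → ℕ) : Finset (ℕ × ℕ → ℕ) :=
  (((cells n lam).pi fun _ => Finset.Icc 1 n).image
      fun g c => if h : c ∈ cells n lam then g c h else 0).filter
    fun σ => NonAttacking n lam σ

/-- The monomial `x^{content(σ)} = x_1^{c_1} ⋯ x_n^{c_n}` in `ℚ(q,t)[x_1,…,x_n]`. -/
def contentMon (n : ℕ) [NeZero n] (lam : ℕ → ℕ) (σ : ℕ × ℕ → ℕ) :
    MvPolynomial (Fin n) Kqt :=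
  ∏ a ∈ Finset.Icc 1 n,
    (MvPolynomial.X (idx n a)) ^ (((cells n lam).filter fun c => σ c = a).card)

/-! ### The weight μ(T) and the content vector (for Statement 4) -/

/-- `l_r = #{r' ≤ r : β_{r'} = β_r}` for the `r`-th entry of the λ-chain (0-based positions). -/
def lcount (Γ : List (ℕ × ℕ × ℕ)) (r : ℕ) : ℕ :=
  ((List.range (r + 1)).filter fun r' => (Γ.getD r' (0, 0, 0)).2 = (Γ.getD r (0, 0, 0)).2).length

/-- The affine map `r̂_r : v ↦ v − (v_i − v_k − l_r)(e_i − e_k)` of `ℝⁿ`,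
for the `r`-th entry `(i,k)` of the λ-chain. -/
def hatr (n : ℕ) [NeZero n] (Γ : List (ℕ × ℕ × ℕ)) (r : ℕ) (v : Fin n → ℝ) : Fin n → ℝ :=
  fun x =>
    v x - (v (idx n (Γ.getD r (0, 0, 0)).2.1) - v (idx n (Γ.getD r (0, 0, 0)).2.2)
            - (lcount Γ r : ℝ)) *
      ((if x = idx n (Γ.getD r (0, 0, 0)).2.1 then (1 : ℝ) else 0) -
        (if x = idx n (Γ.getD r (0, 0, 0)).2.2 then (1 : ℝ) else 0))

/-- `μ(T) = r̂_{j_1} r̂_{j_2} ⋯ r̂_{j_s}(λ) ∈ ℝⁿ` for `T` the subsequence of the λ-chain at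
positions `J = {j_1 < … < j_s}`. -/
def muT (n : ℕ) [NeZero n] (lam : ℕ → ℕ) (J : Finset ℕ) : Fin n → ℝ :=
  (J.sort (· ≤ ·)).foldr (hatr n (lamChain n lam)) fun x => (lam (x.val + 1) : ℝ)

/-- The action of `S_n` on `ℝⁿ` by permuting coordinates: `(w(v))_{w(i)} = v_i`. -/
def wAct {n : ℕ} [NeZero n] (w : Equiv.Perm (Fin n)) (v : Fin n → ℝ) : Fin n → ℝ :=
  fun x => v (w⁻¹ x)

/-- The content vector of a filling, as an element of `ℝⁿ`. -/
def contentVec (n : ℕ) (lam : ℕ → ℕ) (σ : ℕ × ℕ → ℕ) : Fin n → ℝ :=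
  fun x => (((cells n lam).filter fun c => σ c = x.val + 1).card : ℝ)

/-! ### Row sums (Statements 5 and 6) -/

/-- The weight of a subsequence `T` (at positions `J`) of a list `Δ` of transpositions, in the
single-`q` setting: `t^{(ℓ(wT)−ℓ(w)−|T|)/2}(1−t)^{|T|} Π_{(i,k)∈T⁺} 1/(1−q t^{k−i})
Π_{(i,k)∈T⁻} q t^{k−i}/(1−q t^{k−i})`, positivity in the increasing-length convention. -/
def RYrow (n : ℕ) [NeZero n] (w : Equiv.Perm (Fin n)) (Δ : List (ℕ × ℕ)) (J : Finset ℕ) : Kqt :=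
  tt ^ (((len (wT w Δ J) : ℤ) - (len w : ℤ) - (J.card : ℤ)) / 2) * (1 - tt) ^ J.card *
    ∏ r ∈ J,
      (let e := Δ.getD r (0, 0)
       if isPosInc w Δ J r then (1 - qq * tt ^ (e.2 - e.1))⁻¹
       else qq * tt ^ (e.2 - e.1) * (1 - qq * tt ^ (e.2 - e.1))⁻¹)

/-- `Δ = ((1,p+2),(1,p+3),…,(1,n))`. -/
def delta5 (n p : ℕ) : List (ℕ × ℕ) :=
  (List.range (n - p - 1)).map fun r => (1, p + 2 + r)

/-- `Δ = ((i,p+1),(i,p+2),…,(i,n))`. -/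
def delta6 (n i p : ℕ) : List (ℕ × ℕ) :=
  (List.range (n - p)).map fun r => (i, p + 1 + r)

/-! ### The field `ℚ(q_1,…,q_p,t)` and two-column fillings (Statements 7, 9, 10) -/

/-- The field `ℚ(q_1,…,q_p,t)` of rational functions in `p+1` variables. -/
abbrev Kq (p : ℕ) : Type := FractionRing (MvPolynomial (Fin (p + 1)) ℚ)

/-- The variable `q_i` (for `1 ≤ i ≤ p`). -/
def qv (p i : ℕ) : Kq p :=
  algebraMap (MvPolynomial (Fin (p + 1)) ℚ) (Kq p)
    (MvPolynomial.X ⟨(i - 1) % (p + 1), Nat.mod_lt _ (Nat.succ_pos p)⟩)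

/-- The variable `t`. -/
def tv (p : ℕ) : Kq p :=
  algebraMap (MvPolynomial (Fin (p + 1)) ℚ) (Kq p) (MvPolynomial.X ⟨p, Nat.lt_succ_self p⟩)

/-- The multi-`q` weight of a subsequence `T` (at positions `J`) of `Δ`:
`t^{(ℓ(wT)−ℓ(w)−|T|)/2}(1−t)^{|T|} Π_{(i,k)∈T⁺} 1/(1−q_i t^{k−i})
Π_{(i,k)∈T⁻} q_i t^{k−i}/(1−q_i t^{k−i})`, positivity in the increasing-length convention. -/
def RYmulti (n p : ℕ) [NeZero n] (w : Equiv.Perm (Fin n)) (Δ : List (ℕ × ℕ)) (J : Finset ℕ) :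
    Kq p :=
  tv p ^ (((len (wT w Δ J) : ℤ) - (len w : ℤ) - (J.card : ℤ)) / 2) * (1 - tv p) ^ J.card *
    ∏ r ∈ J,
      (let e := Δ.getD r (0, 0)
       if isPosInc w Δ J r then (1 - qv p e.1 * tv p ^ (e.2 - e.1))⁻¹
       else qv p e.1 * tv p ^ (e.2 - e.1) * (1 - qv p e.1 * tv p ^ (e.2 - e.1))⁻¹)

/-- `Δ = ((1,p+1),…,(1,n),(2,p+1),…,(2,n),…,(p,p+1),…,(p,n))`. -/
def delta7 (n p : ℕ) : List (ℕ × ℕ) :=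
  (List.range p).flatMap fun s => (List.range (n - p)).map fun r => (s + 1, p + 1 + r)

/-- The cells of the two-column filling `C_2C_1`, with right column (column 1) of length `p'`
and left column (column 2) of length `p`. -/
def cells2 (p p' : ℕ) : Finset (ℕ × ℕ) :=
  (Finset.Icc 1 p' ×ˢ ({1} : Finset ℕ)) ∪ (Finset.Icc 1 p ×ˢ ({2} : Finset ℕ))

/-- The entry of the two-column filling `C_2C_1` at a cell. -/
def entry2 (C2 C1 : ℕ → ℕ) : ℕ × ℕ → ℕ :=
  fun c => if c.2 = 1 then C1 c.1 else C2 c.1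

/-- `|Inv(C_2C_1)|`: the number of pairs of attacking cells `u` before `v` in reading order
with `entry(u) > entry(v)`. -/
def invPairs2 (C2 C1 : ℕ → ℕ) (p p' : ℕ) : ℕ :=
  ((cells2 p p' ×ˢ cells2 p p').filter fun x =>
    attack x.1 x.2 ∧ readBefore x.1 x.2 ∧ entry2 C2 C1 x.2 < entry2 C2 C1 x.1).card

/-- `inv(C_2C_1) = |Inv(C_2C_1)| − Σ_{u ∈ Des(C_2C_1)} leg(u)` where
`Des(C_2C_1) = {(i,1) : i ≤ p, C_1(i) > C_2(i)}` and `leg(i,1) = p' − i`. -/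
def inv2 (C2 C1 : ℕ → ℕ) (p p' : ℕ) : ℤ :=
  (invPairs2 C2 C1 p p' : ℤ) -
    ∑ i ∈ (Finset.Icc 1 p).filter fun i => C2 i < C1 i, ((p' : ℤ) - (i : ℤ))

/-- `inv(C) = #{(i,k) : i < k, C(i) > C(k)}` for a single column `C` of length `p`. -/
def invColumn (C : ℕ → ℕ) (p : ℕ) : ℕ :=
  ((Finset.Icc 1 p ×ˢ Finset.Icc 1 p).filter fun x => x.1 < x.2 ∧ C x.2 < C x.1).card

end

end Compress

namespace Compress

attribute [local instance] Classical.propDecidable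

noncomputable section SurjAux

/-! #### Basic lemmas on 1-based permutation conventions -/

variable {n : ℕ} [NeZero n]

lemma idx_val {i : ℕ} (h1 : 1 ≤ i) (h2 : i ≤ n) : (idx n i).val = i - 1 := by
  have hn : 0 < n := Nat.pos_of_ne_zero (NeZero.ne n)
  have : i - 1 < n := by omega
  simp [idx, Nat.mod_eq_of_lt this]

lemma idx_inj {i j : ℕ} (hi1 : 1 ≤ i) (hi2 : i ≤ n) (hj1 : 1 ≤ j) (hj2 : j ≤ n)
    (h : idx n i = idx n j) : i = j := by
  have := congrArg Fin.val h
  rw [idx_val hi1 hi2, idx_val hj1 hj2] at this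
  omega

lemma pv_ge_one (w : Equiv.Perm (Fin n)) (i : ℕ) : 1 ≤ pv w i := Nat.le_add_left _ _

lemma pv_le (w : Equiv.Perm (Fin n)) (i : ℕ) : pv w i ≤ n := by
  have := (w (idx n i)).isLt
  unfold pv; omega

lemma exists_pos (w : Equiv.Perm (Fin n)) {val : ℕ} (h1 : 1 ≤ val) (h2 : val ≤ n) :
    ∃ p, 1 ≤ p ∧ p ≤ n ∧ pv w p = val := by
  have hn : 0 < n := Nat.pos_of_ne_zero (NeZero.ne n)
  set x : Fin n := ⟨val - 1, by omega⟩ with hx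
  refine ⟨(w⁻¹ x).val + 1, by omega, by have := (w⁻¹ x).isLt; omega, ?_⟩
  have hidx : idx n ((w⁻¹ x).val + 1) = w⁻¹ x := by
    apply Fin.ext
    rw [idx_val (by omega) (by have := (w⁻¹ x).isLt; omega)]
    simp
  unfold pv
  rw [hidx, Equiv.Perm.coe_inv, Equiv.apply_symm_apply, hx]
  simp; omega

lemma pv_mul_tr_other (u : Equiv.Perm (Fin n)) {a b p : ℕ}
    (ha1 : 1 ≤ a) (ha2 : a ≤ n) (hb1 : 1 ≤ b) (hb2 : b ≤ n) (hp1 : 1 ≤ p) (hp2 : p ≤ n)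
    (hpa : p ≠ a) (hpb : p ≠ b) : pv (u * tr n a b) p = pv u p := by
  unfold pv tr
  rw [Equiv.Perm.mul_apply, Equiv.swap_apply_of_ne_of_ne
    (fun h => hpa (idx_inj hp1 hp2 ha1 ha2 h)) (fun h => hpb (idx_inj hp1 hp2 hb1 hb2 h))]

lemma pv_mul_tr_left (u : Equiv.Perm (Fin n)) (a b : ℕ) : pv (u * tr n a b) a = pv u b := by
  unfold pv tr
  rw [Equiv.Perm.mul_apply, Equiv.swap_apply_left]

lemma tr_mul_tr (u : Equiv.Perm (Fin n)) (a b : ℕ) : u * tr n a b * tr n a b = u := by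
  unfold tr
  rw [mul_assoc, Equiv.swap_mul_self, mul_one]

lemma applyTs_nil (w : Equiv.Perm (Fin n)) : applyTs w [] = w := rfl

lemma applyTs_cons (w : Equiv.Perm (Fin n)) (p : ℕ × ℕ) (L : List (ℕ × ℕ)) :
    applyTs w (p :: L) = applyTs (w * tr n p.1 p.2) L := rfl

lemma applyTs_append (w : Equiv.Perm (Fin n)) (L1 L2 : List (ℕ × ℕ)) :
    applyTs w (L1 ++ L2) = applyTs (applyTs w L1) L2 :=
  List.foldl_append

/-! #### Sorting and `pickP` lemmas -/

lemma pickP_empty (Δ : List (ℕ × ℕ)) : pickP Δ ∅ = [] := by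
  simp [pickP]

lemma pickP_singleton (Δ : List (ℕ × ℕ)) (a : ℕ) : pickP Δ {a} = [Δ.getD a (0, 0)] := by
  simp [pickP]

lemma sort_union_of_lt {A B : Finset ℕ} (h : ∀ a ∈ A, ∀ b ∈ B, a < b) :
    (A ∪ B).sort (· ≤ ·) = A.sort (· ≤ ·) ++ B.sort (· ≤ ·) := by
  refine (fun hp h1 h2 => List.Perm.eq_of_pairwise' (r := (· ≤ ·)) h1 h2 hp) ?_ ?_ ?_
  · apply List.perm_of_nodup_nodup_toFinset_eq (Finset.sort_nodup _ _)
    · exact List.Nodup.append (Finset.sort_nodup _ _) (Finset.sort_nodup _ _)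
        (fun a ha hb => lt_irrefl a (h a (by simpa using ha) a (by simpa using hb)))
    · ext x
      simp [Finset.mem_sort]
  · exact Finset.pairwise_sort _ _
  · rw [List.pairwise_append]
    exact ⟨Finset.pairwise_sort _ _, Finset.pairwise_sort _ _,
      fun a ha b hb => le_of_lt (h a ((Finset.mem_sort _).1 ha) b ((Finset.mem_sort _).1 hb))⟩

lemma pickP_union (Δ : List (ℕ × ℕ)) {A B : Finset ℕ} (h : ∀ a ∈ A, ∀ b ∈ B, a < b) :
    pickP Δ (A ∪ B) = pickP Δ A ++ pickP Δ B := by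
  unfold pickP
  rw [sort_union_of_lt h, List.map_append]

lemma sort_image_add (a : ℕ) (S : Finset ℕ) :
    (S.image (a + ·)).sort (· ≤ ·) = (S.sort (· ≤ ·)).map (a + ·) := by
  refine (fun hp h1 h2 => List.Perm.eq_of_pairwise' (r := (· ≤ ·)) h1 h2 hp) ?_ ?_ ?_
  · apply List.perm_of_nodup_nodup_toFinset_eq (Finset.sort_nodup _ _)
    · exact List.Nodup.map (fun x y hxy => by omega) (Finset.sort_nodup _ _)
    · ext x
      simp [Finset.mem_sort, List.mem_map]
  · exact Finset.pairwise_sort _ _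
  · exact List.pairwise_map.mpr
      (List.Pairwise.imp (fun h => by omega) (Finset.pairwise_sort S (· ≤ ·)))

lemma pickP_shift (Δ Δ' : List (ℕ × ℕ)) (a : ℕ) (S : Finset ℕ)
    (h : ∀ l ∈ S, Δ.getD (a + l) (0, 0) = Δ'.getD l (0, 0)) :
    pickP Δ (S.image (a + ·)) = pickP Δ' S := by
  unfold pickP
  rw [sort_image_add, List.map_map]
  apply List.map_congr_left
  intro l hl
  exact h l ((Finset.mem_sort _).1 hl)

/-! #### flatMap over `List.range` -/

/-- Offset of the `s`-th block in `(List.range N).flatMap f`. -/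
def offl {α : Type*} (f : ℕ → List α) (s : ℕ) : ℕ :=
  ((List.range s).map (fun i => (f i).length)).sum

lemma offl_succ {α : Type*} (f : ℕ → List α) (s : ℕ) :
    offl f (s + 1) = offl f s + (f s).length := by
  simp [offl, List.range_succ]

lemma offl_mono {α : Type*} (f : ℕ → List α) {s t : ℕ} (h : s ≤ t) : offl f s ≤ offl f t := by
  induction t with
  | zero => simp_all [offl]
  | succ t ih =>
    rcases Nat.lt_or_ge s (t + 1) with h' | h'
    · exact le_trans (ih (by omega)) (by rw [offl_succ]; omega)
    · have : s = t + 1 := by omega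
      subst this; rfl

lemma length_flatMap_range {α : Type*} (f : ℕ → List α) (N : ℕ) :
    ((List.range N).flatMap f).length = offl f N := by
  rw [List.length_flatMap]
  simp [offl, Function.comp_def]

lemma getD_flatMap_range {α : Type*} (f : ℕ → List α) (N s l : ℕ) (hs : s < N)
    (hl : l < (f s).length) (d : α) :
    ((List.range N).flatMap f).getD (offl f s + l) d = (f s).getD l d := by
  have h1 : N = s + (1 + (N - s - 1)) := by omega
  rw [h1, List.range_add, List.flatMap_append, List.range_add, List.map_append, List.map_map,
    List.flatMap_append]
  rw [List.getD_append_right _ _ _ _ (by rw [length_flatMap_range]; omega)]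
  rw [length_flatMap_range]
  have h2 : offl f s + l - offl f s = l := by omega
  rw [h2]
  have h3 : (List.map (fun x => s + x) (List.range 1)).flatMap f = f s := by
    show (List.map (fun x => s + x) [0]).flatMap f = f s
    simp
  rw [h3, List.getD_append _ _ _ _ hl]

lemma exists_seg {α : Type*} (f : ℕ → List α) (N r : ℕ) (hr : r < offl f N) :
    ∃ s, s < N ∧ ∃ l, l < (f s).length ∧ r = offl f s + l := by
  induction N with
  | zero => simp [offl] at hr
  | succ N ih =>
    rw [offl_succ] at hr
    by_cases h : r < offl f N
    · obtain ⟨s, hs, l, hl, he⟩ := ih h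
      exact ⟨s, by omega, l, hl, he⟩
    · exact ⟨N, by omega, r - offl f N, by omega, by omega⟩

end SurjAux

noncomputable section SurjAux2

attribute [local instance] Classical.propDecidable

/-! #### Structure of `GammaK`, `GammaK'` and the λ-chain -/

/-- Unified form of `GammaK`/`GammaK'`: rows `i = k, …, 1` with row `i = (i,n),…,(i,low)`. -/
def rowsL (n k low : ℕ) : List (ℕ × ℕ) :=
  (List.range k).flatMap fun s => rowL n (k - s) low

lemma GammaK_eq_rowsL (n k : ℕ) : GammaK n k = rowsL n k (k + 1) := rfl

lemma GammaK'_eq_rowsL (n k : ℕ) : GammaK' n k = rowsL n k (k + 2) := rfl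

lemma rowL_length (n i low : ℕ) : (rowL n i low).length = n + 1 - low := by
  simp [rowL]

lemma offl_rowsL (n k low s : ℕ) :
    offl (fun s => rowL n (k - s) low) s = s * (n + 1 - low) := by
  induction s with
  | zero => simp [offl]
  | succ s ih => rw [offl_succ, ih, rowL_length]; ring

lemma rowsL_length (n k low : ℕ) : (rowsL n k low).length = k * (n + 1 - low) := by
  rw [rowsL, length_flatMap_range, offl_rowsL]

lemma rowsL_getD (n k low s r : ℕ) (hs : s < k) (hr : r < n + 1 - low) :
    (rowsL n k low).getD (s * (n + 1 - low) + r) (0, 0) = (k - s, n - r) := by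
  rw [rowsL, ← offl_rowsL n k low s,
    getD_flatMap_range _ _ _ _ hs (by rw [rowL_length]; exact hr)]
  rw [rowL, List.getD_eq_getElem _ _ (by simpa [rowL] using hr)]
  simp

/-- The underlying root list of the `s`-th segment of the λ-chain. -/
def gbase (n : ℕ) (lam : ℕ → ℕ) (s : ℕ) : List (ℕ × ℕ) :=
  if conj n lam (lam 1 - s - 1) = conj n lam (lam 1 - s) then GammaK n (conj n lam (lam 1 - s))
  else GammaK' n (conj n lam (lam 1 - s))

/-- The `s`-th segment of the λ-chain (`s = λ_1 - j` for the segment `Γ_j`). -/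
def segf (n : ℕ) (lam : ℕ → ℕ) (s : ℕ) : List (ℕ × ℕ × ℕ) :=
  (gbase n lam s).map fun p => (lam 1 - s, p.1, p.2)

lemma lamChain_eq (n : ℕ) (lam : ℕ → ℕ) :
    lamChain n lam = (List.range (lam 1 - 1)).flatMap (segf n lam) := rfl

lemma segf_length (n : ℕ) (lam : ℕ → ℕ) (s : ℕ) :
    (segf n lam s).length = (gbase n lam s).length := by
  rw [segf, List.length_map]

lemma segf_getD (n : ℕ) (lam : ℕ → ℕ) {s l : ℕ} (hl : l < (gbase n lam s).length) :
    (segf n lam s).getD l (0, 0, 0) = (lam 1 - s, (gbase n lam s).getD l (0, 0)) := by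
  rw [segf, List.getD_eq_getElem _ _ (by simpa using hl), List.getElem_map,
    List.getD_eq_getElem _ _ hl]

lemma chainRoots_getD {Γ : List (ℕ × ℕ × ℕ)} {r : ℕ} (hr : r < Γ.length) :
    (chainRoots Γ).getD r (0, 0) = (Γ.getD r (0, 0, 0)).2 := by
  rw [chainRoots, List.getD_eq_getElem _ _ (by simpa using hr), List.getD_eq_getElem _ _ hr,
    List.getElem_map]

lemma chain_length (n : ℕ) (lam : ℕ → ℕ) :
    (lamChain n lam).length = offl (segf n lam) (lam 1 - 1) := by
  rw [lamChain_eq, length_flatMap_range]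

/-- Positions strictly before `Boff n lam j` are exactly those in segments of index `> j`. -/
def Boff (n : ℕ) (lam : ℕ → ℕ) (j : ℕ) : ℕ := offl (segf n lam) (lam 1 - j)

lemma chain_index_iff (n : ℕ) (lam : ℕ → ℕ) {j r : ℕ} (hj : 1 ≤ j)
    (hr : r < (lamChain n lam).length) :
    j < ((lamChain n lam).getD r (0, 0, 0)).1 ↔ r < Boff n lam j := by
  rw [chain_length] at hr
  obtain ⟨s, hs, l, hl, he⟩ := exists_seg _ _ _ hr
  subst he
  rw [lamChain_eq, getD_flatMap_range _ _ _ _ hs hl]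
  have hl' : l < (gbase n lam s).length := by rwa [← segf_length]
  rw [segf_getD n lam hl']
  show j < lam 1 - s ↔ _
  constructor
  · intro h
    have hs1 : s + 1 ≤ lam 1 - j := by omega
    calc offl (segf n lam) s + l < offl (segf n lam) (s + 1) := by
          rw [offl_succ, segf_length]; omega
      _ ≤ Boff n lam j := offl_mono _ hs1
  · intro h
    by_contra hc
    have h2 : Boff n lam j ≤ offl (segf n lam) s := offl_mono _ (by omega)
    omega

/-! #### Facts about `conj` and `cells` -/

lemma lam_anti {n : ℕ} {lam : ℕ → ℕ} (hreg : ∀ i, 1 ≤ i → i < n → lam (i + 1) < lam i)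
    {a b : ℕ} (ha : 1 ≤ a) (hab : a ≤ b) (hbn : b ≤ n) : lam b ≤ lam a := by
  induction b with
  | zero => omega
  | succ b ih =>
    rcases Nat.lt_or_ge a (b + 1) with h | h
    · have h1 := hreg b (by omega) (by omega)
      have h2 := ih (by omega) (by omega)
      omega
    · have : a = b + 1 := by omega
      subst this; rfl

lemma conj_le (n : ℕ) (lam : ℕ → ℕ) (j : ℕ) : conj n lam j ≤ n - 1 := by
  unfold conj
  calc _ ≤ (Finset.Icc 1 (n - 1)).card := Finset.card_filter_le _ _
    _ = n - 1 := by rw [Nat.card_Icc]; omega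

lemma conj_anti (n : ℕ) (lam : ℕ → ℕ) {j j' : ℕ} (h : j ≤ j') :
    conj n lam j' ≤ conj n lam j := by
  apply Finset.card_le_card
  apply Finset.monotone_filter_right
  intro i hi
  omega

lemma conj_char {n : ℕ} {lam : ℕ → ℕ} (hreg : ∀ i, 1 ≤ i → i < n → lam (i + 1) < lam i)
    {j i : ℕ} (hj : 1 ≤ j) (hi : 1 ≤ i) :
    i ≤ conj n lam j ↔ i ≤ n - 1 ∧ j ≤ lam i := by
  constructor
  · intro h
    by_contra hc
    have hmem : ∀ x ∈ (Finset.Icc 1 (n - 1)).filter (fun i => j ≤ lam i), x < i := by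
      intro x hx
      by_contra hxi
      push_neg at hxi
      rw [Finset.mem_filter, Finset.mem_Icc] at hx
      apply hc
      refine ⟨by omega, le_trans hx.2 (lam_anti hreg hi hxi (by omega))⟩
    have hsub : (Finset.Icc 1 (n - 1)).filter (fun i => j ≤ lam i) ⊆ Finset.Icc 1 (i - 1) := by
      intro x hx
      have h1 := hmem x hx
      rw [Finset.mem_filter, Finset.mem_Icc] at hx
      rw [Finset.mem_Icc]
      omega
    have h2 := Finset.card_le_card hsub
    rw [Nat.card_Icc] at h2
    unfold conj at h
    omega
  · rintro ⟨h1, h2⟩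
    have hsub : Finset.Icc 1 i ⊆ (Finset.Icc 1 (n - 1)).filter (fun i => j ≤ lam i) := by
      intro x hx
      rw [Finset.mem_Icc] at hx
      rw [Finset.mem_filter, Finset.mem_Icc]
      exact ⟨⟨hx.1, by omega⟩, le_trans h2 (lam_anti hreg hx.1 hx.2 (by omega))⟩
    have h3 := Finset.card_le_card hsub
    rw [Nat.card_Icc] at h3
    unfold conj
    omega

lemma mem_cells {n : ℕ} {lam : ℕ → ℕ} {i j : ℕ} :
    (i, j) ∈ cells n lam ↔ (1 ≤ i ∧ i ≤ n - 1) ∧ (1 ≤ j ∧ j ≤ lam 1) ∧ j ≤ lam i := by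
  simp [cells, Finset.mem_filter, Finset.mem_product, Finset.mem_Icc, and_assoc]

lemma cell_of {n : ℕ} {lam : ℕ → ℕ} (hreg : ∀ i, 1 ≤ i → i < n → lam (i + 1) < lam i)
    {i j : ℕ} (hi : 1 ≤ i) (hj : 1 ≤ j) (hjm : j ≤ lam 1) (hic : i ≤ conj n lam j) :
    (i, j) ∈ cells n lam := by
  obtain ⟨h1, h2⟩ := (conj_char hreg hj hi).1 hic
  exact mem_cells.2 ⟨⟨hi, h1⟩, ⟨hj, hjm⟩, h2⟩

/-! #### Existence of a permutation with prescribed initial values -/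

lemma exists_perm_values {n : ℕ} [NeZero n] (k : ℕ) (v : ℕ → ℕ)
    (hv1 : ∀ i, 1 ≤ i → i ≤ k → 1 ≤ v i ∧ v i ≤ n)
    (hvd : ∀ i i', 1 ≤ i → i < i' → i' ≤ k → v i ≠ v i') :
    ∃ π : Equiv.Perm (Fin n), ∀ i, 1 ≤ i → i ≤ k → pv π i = v i := by
  induction k with
  | zero => exact ⟨1, fun i h1 h2 => by omega⟩
  | succ k ih =>
    obtain ⟨π, hπ⟩ := ih (fun i h1 h2 => hv1 i h1 (by omega))
      (fun i i' h1 h2 h3 => hvd i i' h1 h2 (by omega))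
    have hvk := hv1 (k + 1) (by omega) le_rfl
    obtain ⟨mp, hm1, hm2, hm3⟩ := exists_pos π hvk.1 hvk.2
    have hkn : k + 1 ≤ n := by
      have hinj : Set.InjOn v (Finset.Icc 1 (k + 1)) := by
        intro a ha b hb hab
        simp only [Finset.coe_Icc, Set.mem_Icc] at ha hb
        rcases Nat.lt_trichotomy a b with h | h | h
        · exact absurd hab (hvd a b ha.1 h hb.2)
        · exact h
        · exact absurd hab.symm (hvd b a hb.1 h ha.2)
      have hmapsto : ∀ a ∈ Finset.Icc 1 (k + 1), v a ∈ Finset.Icc 1 n := by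
        intro a ha
        rw [Finset.mem_Icc] at ha ⊢
        exact hv1 a ha.1 ha.2
      have hc := Finset.card_le_card_of_injOn v hmapsto hinj
      rw [Nat.card_Icc, Nat.card_Icc] at hc
      omega
    by_cases hcase : mp = k + 1
    · exact ⟨π, fun i h1 h2 => by
        rcases Nat.lt_or_ge i (k + 1) with h | h
        · exact hπ i h1 (by omega)
        · have : i = k + 1 := by omega
          subst this; exact hcase ▸ hm3⟩
    · have hmk : mp > k := by
        by_contra hmk
        push_neg at hmk
        have h2 := hπ mp hm1 hmk
        have heq : v mp = v (k + 1) := by rw [← h2]; exact hm3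
        exact hvd mp (k + 1) hm1 (by omega) le_rfl heq
      refine ⟨π * tr n (k + 1) mp, fun i h1 h2 => ?_⟩
      rcases Nat.lt_or_ge i (k + 1) with h | h
      · rw [pv_mul_tr_other π (by omega) hkn hm1 hm2 h1 (by omega) (by omega) (by omega)]
        exact hπ i h1 (by omega)
      · have : i = k + 1 := by omega
        subst this
        rw [pv_mul_tr_left]
        exact hm3

end SurjAux2

noncomputable section SurjAux3

attribute [local instance] Classical.propDecidable

variable {n : ℕ} [NeZero n]

/-- Core per-segment construction: given a target left column `v` nonattacking with the
right-column permutation `π'`, there is a permutation `π` with first `k` values `v` and a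
subsequence of the segment `rowsL n k low` carrying `π` to `π'`. -/
lemma seg_exists (k low : ℕ) (hk : k ≤ n - 1) (hlow1 : k + 1 ≤ low) (hlow2 : low ≤ k + 2)
    (π' : Equiv.Perm (Fin n)) (v : ℕ → ℕ)
    (hv1 : ∀ i, 1 ≤ i → i ≤ k → 1 ≤ v i ∧ v i ≤ n)
    (hvd : ∀ i i', 1 ≤ i → i < i' → i' ≤ k → v i ≠ v i')
    (hvb : ∀ i p, 1 ≤ i → i ≤ k → i < p → p + 1 ≤ low → v i ≠ pv π' p) :
    ∃ (π : Equiv.Perm (Fin n)) (S : Finset ℕ),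
      (∀ r ∈ S, r < k * (n + 1 - low)) ∧
      applyTs π (pickP (rowsL n k low) S) = π' ∧
      ∀ i, 1 ≤ i → i ≤ k → pv π i = v i := by
  suffices h : ∀ i, i ≤ k → ∃ (u : Equiv.Perm (Fin n)) (S : Finset ℕ),
      (∀ r ∈ S, (k - i) * (n + 1 - low) ≤ r ∧ r < k * (n + 1 - low)) ∧
      applyTs u (pickP (rowsL n k low) S) = π' ∧
      (∀ p, 1 ≤ p → p ≤ i → pv u p = v p) ∧
      (∀ p, i < p → p + 1 ≤ low → pv u p = pv π' p) by
    obtain ⟨u, S, h1, h2, h3, _⟩ := h k le_rfl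
    exact ⟨u, S, fun r hr => (h1 r hr).2, h2, h3⟩
  intro i
  induction i with
  | zero =>
    intro _
    exact ⟨π', ∅, by simp, by rw [pickP_empty, applyTs_nil], fun p hp1 hp2 => by omega,
      fun p _ _ => rfl⟩
  | succ i ih =>
    intro hik
    obtain ⟨u, S, hS, happ, hval, hinv⟩ := ih (by omega)
    have hi1 : (1 : ℕ) ≤ i + 1 := by omega
    have hin : i + 1 ≤ n := by omega
    have hvi := hv1 (i + 1) hi1 hik
    obtain ⟨mp, hm1, hm2, hm3⟩ := exists_pos u hvi.1 hvi.2
    by_cases hcase : mp = i + 1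
    · refine ⟨u, S, fun r hr => ⟨?_, (hS r hr).2⟩, happ, ?_, ?_⟩
      · calc (k - (i + 1)) * (n + 1 - low) ≤ (k - i) * (n + 1 - low) :=
            Nat.mul_le_mul_right _ (by omega)
          _ ≤ r := (hS r hr).1
      · intro p hp1 hp2
        rcases Nat.lt_or_ge p (i + 1) with h | h
        · exact hval p hp1 (by omega)
        · have : p = i + 1 := by omega
          subst this
          exact hcase ▸ hm3
      · intro p hp hp2
        exact hinv p (by omega) hp2
    · -- the value `v (i+1)` sits at a position `mp ≥ low`; swap it in
      have hmlow : low ≤ mp := by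
        by_contra hlt
        push_neg at hlt
        rcases Nat.lt_or_ge mp (i + 1) with h | h
        · have h2 := hval mp hm1 (by omega)
          have heq : v mp = v (i + 1) := by rw [← h2]; exact hm3
          exact hvd mp (i + 1) hm1 (by omega) hik heq
        · have h2 := hinv mp (by omega) (by omega)
          have heq : v (i + 1) = pv π' mp := by rw [← h2]; exact hm3.symm
          exact hvb (i + 1) mp hi1 hik (by omega) (by omega) heq
      have hrl : 1 ≤ n + 1 - low := by omega
      have hnm : n - mp < n + 1 - low := by omega
      set pnew := (k - (i + 1)) * (n + 1 - low) + (n - mp) with hpnew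
      have hplt : pnew < (k - i) * (n + 1 - low) := by
        have he : k - i = (k - (i + 1)) + 1 := by omega
        rw [hpnew, he, add_mul, one_mul]
        omega
      have hub : pnew < k * (n + 1 - low) :=
        lt_of_lt_of_le hplt (Nat.mul_le_mul_right _ (by omega))
      have hgd : (rowsL n k low).getD pnew (0, 0) = (i + 1, mp) := by
        have h := rowsL_getD n k low (k - (i + 1)) (n - mp) (by omega) hnm
        rw [hpnew, h]
        have e1 : k - (k - (i + 1)) = i + 1 := by omega
        have e2 : n - (n - mp) = mp := by omega
        rw [e1, e2]
      refine ⟨u * tr n (i + 1) mp, insert pnew S, ?_, ?_, ?_, ?_⟩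
      · intro r hr
        rcases Finset.mem_insert.1 hr with h | h
        · subst h
          exact ⟨Nat.le_add_right _ _, hub⟩
        · exact ⟨le_trans (Nat.mul_le_mul_right _ (by omega)) (hS r h).1, (hS r h).2⟩
      · rw [Finset.insert_eq,
          pickP_union _ (by
            intro a ha b hb
            rw [Finset.mem_singleton] at ha
            subst ha
            exact lt_of_lt_of_le hplt (hS b hb).1),
          pickP_singleton, hgd, List.singleton_append, applyTs_cons]
        show applyTs (u * tr n (i + 1) mp * tr n (i + 1) mp) _ = π'
        rw [tr_mul_tr]
        exact happ
      · intro p hp1 hp2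
        rcases Nat.lt_or_ge p (i + 1) with h | h
        · rw [pv_mul_tr_other u hi1 hin hm1 hm2 hp1 (by omega) (by omega) (by omega)]
          exact hval p hp1 (by omega)
        · have : p = i + 1 := by omega
          subst this
          rw [pv_mul_tr_left]
          exact hm3
      · intro p hp hp2
        rw [pv_mul_tr_other u hi1 hin hm1 hm2 (by omega) (by omega) (by omega) (by omega)]
        exact hinv p (by omega) hp2

end SurjAux3

noncomputable section SurjAux4

attribute [local instance] Classical.propDecidable

/-- Main induction: column-by-column construction of a folding pair matching σ on the
columns `j ≤ c`. -/
lemma main_ind {n : ℕ} [NeZero n] (hn : 2 ≤ n) (lam : ℕ → ℕ)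
    (hreg : ∀ i, 1 ≤ i → i < n → lam (i + 1) < lam i)
    (σ : ℕ × ℕ → ℕ) (hσ : NonAttacking n lam σ) :
    ∀ c, 1 ≤ c → c ≤ lam 1 →
      ∃ (π : Equiv.Perm (Fin n)) (J : Finset ℕ),
        (∀ r ∈ J, Boff n lam c ≤ r ∧ r < offl (segf n lam) (lam 1 - 1)) ∧
        ∀ j0 i, 1 ≤ j0 → j0 ≤ c → 1 ≤ i → i ≤ conj n lam j0 →
          pv (applyTs π (pickP (chainRoots (lamChain n lam))
            (J.filter (fun r => r < Boff n lam j0)))) i = σ (i, j0) := by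
  intro c
  induction c with
  | zero => omega
  | succ c ih =>
    intro _ hc2
    by_cases hc0 : c = 0
    · -- base case: the rightmost column
      subst hc0
      obtain ⟨π, hπ⟩ := exists_perm_values (n := n) (conj n lam 1) (fun i => σ (i, 1))
        (fun i h1 h2 => by
          have hcell : (i, 1) ∈ cells n lam := cell_of hreg h1 le_rfl hc2 h2
          have hmem := hσ.1 _ hcell
          rw [Finset.mem_Icc] at hmem
          exact hmem)
        (fun i i' h1 h2 h3 => by
          have hcell : (i, 1) ∈ cells n lam := cell_of hreg h1 le_rfl hc2 (by omega)
          have hcell' : (i', 1) ∈ cells n lam := cell_of hreg (by omega) le_rfl hc2 h3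
          exact hσ.2 _ hcell _ hcell' (Or.inl ⟨rfl, by omega⟩))
      refine ⟨π, ∅, by simp, ?_⟩
      intro j0 i hj0 hj0c hi1 hik
      have hj01 : j0 = 1 := by omega
      subst hj01
      rw [Finset.filter_empty, pickP_empty, applyTs_nil]
      exact hπ i hi1 hik
    · -- inductive step: add the segment for column c+1
      have hc1 : 1 ≤ c := by omega
      obtain ⟨π, J, hJ, hIH⟩ := ih (by omega) (by omega)
      have hccanti : conj n lam (c + 1) ≤ conj n lam c := conj_anti n lam (by omega)
      obtain ⟨low, hlow1, hlow2, hlowc, hgb⟩ :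
          ∃ low, conj n lam (c + 1) + 1 ≤ low ∧ low ≤ conj n lam (c + 1) + 2 ∧
            low ≤ conj n lam c + 1 ∧
            gbase n lam (lam 1 - (c + 1)) = rowsL n (conj n lam (c + 1)) low := by
        have e1 : lam 1 - (lam 1 - (c + 1)) = c + 1 := by omega
        have e2 : lam 1 - (lam 1 - (c + 1)) - 1 = c := by omega
        by_cases hcond : conj n lam c = conj n lam (c + 1)
        · refine ⟨conj n lam (c + 1) + 1, le_rfl, by omega, by omega, ?_⟩
          simp only [gbase]
          rw [e2, e1, if_pos hcond, GammaK_eq_rowsL]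
        · refine ⟨conj n lam (c + 1) + 2, by omega, le_rfl, by omega, ?_⟩
          simp only [gbase]
          rw [e2, e1, if_neg hcond, GammaK'_eq_rowsL]
      have hs0lt : lam 1 - (c + 1) < lam 1 - 1 := by omega
      have hseglen : (segf n lam (lam 1 - (c + 1))).length
          = conj n lam (c + 1) * (n + 1 - low) := by
        rw [segf_length, hgb, rowsL_length]
      have hBsucc : Boff n lam c
          = Boff n lam (c + 1) + conj n lam (c + 1) * (n + 1 - low) := by
        have e3 : lam 1 - c = (lam 1 - (c + 1)) + 1 := by omega
        rw [Boff, Boff, e3, offl_succ, hseglen]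
      have hfe : J.filter (fun r => r < Boff n lam c) = ∅ :=
        Finset.filter_false_of_mem (fun r hr => by have := (hJ r hr).1; omega)
      have hπc : ∀ p, 1 ≤ p → p ≤ conj n lam c → pv π p = σ (p, c) := by
        intro p hp1 hp2
        have h := hIH c p hc1 le_rfl hp1 hp2
        rwa [hfe, pickP_empty, applyTs_nil] at h
      obtain ⟨πn, S, hSb, hApp, hVal⟩ := seg_exists (conj n lam (c + 1)) low
        (conj_le n lam (c + 1)) hlow1 hlow2 π (fun i => σ (i, c + 1))
        (fun i h1 h2 => by
          have hcell : (i, c + 1) ∈ cells n lam := cell_of hreg h1 (by omega) hc2 h2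
          have hmem := hσ.1 _ hcell
          rw [Finset.mem_Icc] at hmem
          exact hmem)
        (fun i i' h1 h2 h3 => by
          have hcell : (i, c + 1) ∈ cells n lam := cell_of hreg h1 (by omega) hc2 (by omega)
          have hcell' : (i', c + 1) ∈ cells n lam := cell_of hreg (by omega) (by omega) hc2 h3
          exact hσ.2 _ hcell _ hcell' (Or.inl ⟨rfl, by omega⟩))
        (fun i p hi1 hik hip hpl => by
          have hpc : p ≤ conj n lam c := by omega
          rw [hπc p (by omega) hpc]
          exact hσ.2 _ (cell_of hreg hi1 (by omega) hc2 hik) _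
            (cell_of hreg (by omega) (by omega) (by omega) hpc)
            (Or.inr (Or.inl ⟨rfl, hip⟩)))
      refine ⟨πn, (S.image (Boff n lam (c + 1) + ·)) ∪ J, ?_, ?_⟩
      · intro r hr
        rcases Finset.mem_union.1 hr with h | h
        · obtain ⟨l, hl, he⟩ := Finset.mem_image.1 h
          subst he
          have hlS := hSb l hl
          refine ⟨Nat.le_add_right _ _, ?_⟩
          have h2 : Boff n lam c ≤ offl (segf n lam) (lam 1 - 1) := offl_mono _ (by omega)
          omega
        · have h1 := hJ r h
          have hBanti : Boff n lam (c + 1) ≤ Boff n lam c := offl_mono _ (by omega)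
          exact ⟨by omega, h1.2⟩
      · intro j0 i hj0 hj0c hi1 hik
        rw [Finset.filter_union]
        by_cases hj0case : j0 = c + 1
        · subst hj0case
          have h1 : (S.image (Boff n lam (c + 1) + ·)).filter
              (fun r => r < Boff n lam (c + 1)) = ∅ :=
            Finset.filter_false_of_mem (fun r hr => by
              obtain ⟨l, hl, he⟩ := Finset.mem_image.1 hr
              omega)
          have h2 : J.filter (fun r => r < Boff n lam (c + 1)) = ∅ :=
            Finset.filter_false_of_mem (fun r hr => by
              have h3 := (hJ r hr).1
              have hBanti : Boff n lam (c + 1) ≤ Boff n lam c := offl_mono _ (by omega)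
              omega)
          rw [h1, h2, Finset.empty_union, pickP_empty, applyTs_nil]
          exact hVal i hi1 hik
        · have hj0c' : j0 ≤ c := by omega
          have hBj0 : Boff n lam c ≤ Boff n lam j0 := offl_mono _ (by omega)
          have h1 : (S.image (Boff n lam (c + 1) + ·)).filter
              (fun r => r < Boff n lam j0) = S.image (Boff n lam (c + 1) + ·) :=
            Finset.filter_true_of_mem (fun r hr => by
              obtain ⟨l, hl, he⟩ := Finset.mem_image.1 hr
              have h3 := hSb l hl
              omega)
          rw [h1, pickP_union _ (fun a ha b hb => by
            obtain ⟨l, hl, he⟩ := Finset.mem_image.1 ha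
            have h3 := hSb l hl
            have h4 := (Finset.mem_filter.1 hb).1
            have h5 := (hJ b h4).1
            omega), applyTs_append]
          have hpick : pickP (chainRoots (lamChain n lam))
              (S.image (Boff n lam (c + 1) + ·))
              = pickP (rowsL n (conj n lam (c + 1)) low) S := by
            apply pickP_shift
            intro l hl
            have hlS := hSb l hl
            have hlt : Boff n lam (c + 1) + l < (lamChain n lam).length := by
              rw [chain_length]
              have h2 : Boff n lam c ≤ offl (segf n lam) (lam 1 - 1) := offl_mono _ (by omega)
              omega
            have hlseg : l < (segf n lam (lam 1 - (c + 1))).length := by omega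
            have hlbase : l < (gbase n lam (lam 1 - (c + 1))).length := by
              rw [← segf_length]; exact hlseg
            rw [chainRoots_getD hlt, lamChain_eq]
            simp only [Boff]
            rw [getD_flatMap_range _ _ _ _ hs0lt hlseg, segf_getD n lam hlbase, hgb]
          rw [hpick, hApp]
          exact hIH j0 i hj0 hj0c' hi1 hik

end SurjAux4


/-- The filling map `f : ℱ(λ) → T(λ,n)` is surjective: every nonattacking
filling `σ ∈ T(λ,n)` is of the form `f(w,T)` for some folding pair `(w,T)`. -/
theorem fmap_surjective (n : ℕ) [NeZero n] (hn : 2 ≤ n) (lam : ℕ → ℕ)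
    (hreg : ∀ i, 1 ≤ i → i < n → lam (i + 1) < lam i) (hzero : lam n = 0)
    (σ : ℕ × ℕ → ℕ) (hσ : NonAttacking n lam σ) :
    ∃ (w : Equiv.Perm (Fin n)) (J : Finset ℕ),
      J ⊆ Finset.range (lamChain n lam).length ∧
        ∀ u ∈ cells n lam, fmap n lam w J u = σ u := by
  have hn1 : 1 ≤ n - 1 := by omega
  have hlamn1 : 1 ≤ lam (n - 1) := by
    have h1 := hreg (n - 1) hn1 (by omega)
    have e : n - 1 + 1 = n := by omega
    rw [e, hzero] at h1
    omega
  have hm1 : 1 ≤ lam 1 := le_trans hlamn1 (lam_anti hreg le_rfl hn1 (by omega))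
  obtain ⟨π, J, hJ, hval⟩ := main_ind hn lam hreg σ hσ (lam 1) hm1 le_rfl
  refine ⟨π, J, ?_, ?_⟩
  · intro r hr
    rw [Finset.mem_range, chain_length]
    exact (hJ r hr).2
  · rintro ⟨i, j0⟩ hu
    obtain ⟨⟨hi1, hin⟩, ⟨hj1, hjm⟩, hji⟩ := mem_cells.1 hu
    have hic : i ≤ conj n lam j0 := (conj_char hreg hj1 hi1).2 ⟨hin, hji⟩
    have hfeq : J.filter (fun r => j0 < ((lamChain n lam).getD r (0, 0, 0)).1)
        = J.filter (fun r => r < Boff n lam j0) := by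
      apply Finset.filter_congr
      intro r hr
      have hrlt : r < (lamChain n lam).length := by
        rw [chain_length]
        exact (hJ r hr).2
      exact chain_index_iff n lam hj1 hrlt
    have h := hval j0 i hj1 hjm hi1 hic
    simp only [fmap]
    rw [if_pos hu]
    show pv (pij n lam π J j0) i = σ (i, j0)
    simp only [pij]
    rw [hfeq]
    exact h


end Compress
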